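/- Let B ⊆ ℝ(x₁,…,x_n) be an ℝ[x₁,…,x_n]-subalgebra satisfying the substitution property over ℝ[x₁,…,x_n]. If f = p/q ∈ B with p, q ∈ ℝ[x₁,…,x_n] coprime, then the real zero set Z(q) is contained in Z(p). -/

import Mathlib

open MvPolynomial

class IsRealClosedField (R : Type) [Field R] [LinearOrder R] [IsStrictOrderedRing R] : Prop where
  isSquare_of_nonneg : ∀ x : R, 0 ≤ x → IsSquare x
  exists_root_of_odd : ∀ p : Polynomial R, Odd p.natDegree → ∃ x : R, p.eval x = 0

/-- The real zero set of a polynomial in `n` variables. -/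
def Zset (n : ℕ) (r : MvPolynomial (Fin n) ℝ) : Set (Fin n → ℝ) :=
  {x | eval x r = 0}

lemma real_odd_root (P : Polynomial ℝ) (hodd : Odd P.natDegree) : ∃ x : ℝ, P.eval x = 0 := by
  have hP0 : P ≠ 0 := by
    intro h; rw [h] at hodd; simp at hodd
  have hdegpos : 0 < P.degree := by
    rw [Polynomial.natDegree_pos_iff_degree_pos.symm]
    rcases hodd with ⟨k, hk⟩; omega
  -- reduce to positive leading coefficient
  suffices h : ∀ Q : Polynomial ℝ, Odd Q.natDegree → 0 < Q.leadingCoeff →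
      ∃ x : ℝ, Q.eval x = 0 by
    rcases lt_or_gt_of_ne (Polynomial.leadingCoeff_ne_zero.mpr hP0) with hlt | hgt
    · obtain ⟨x, hx⟩ := h (-P) (by simpa using hodd) (by simpa using hlt)
      exact ⟨x, by simpa using hx⟩
    · exact h P hodd hgt
  intro Q hQodd hQpos
  have hQ0 : Q ≠ 0 := fun h => by simp [h] at hQpos
  have hQdeg : 0 < Q.degree := by
    rw [← Polynomial.natDegree_pos_iff_degree_pos]
    rcases hQodd with ⟨k, hk⟩; omega
  have htop : Filter.Tendsto (fun x => Q.eval x) Filter.atTop Filter.atTop :=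
    Polynomial.tendsto_atTop_of_leadingCoeff_nonneg Q hQdeg hQpos.le
  -- at bot: consider Q.comp (-X)
  set Q' : Polynomial ℝ := Q.comp (-Polynomial.X) with hQ'
  have hcompdeg : Q'.natDegree = Q.natDegree := by
    rw [hQ', Polynomial.natDegree_comp]
    simp
  have hlc' : Q'.leadingCoeff = Q.leadingCoeff * (-1) ^ Q.natDegree := by
    rw [hQ', Polynomial.leadingCoeff_comp (by simp)]
    simp [Polynomial.leadingCoeff_neg]
  have hlcneg : Q'.leadingCoeff < 0 := by
    rw [hlc', hQodd.neg_one_pow]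
    simpa using hQpos
  have hQ'deg : 0 < Q'.degree := by
    rw [← Polynomial.natDegree_pos_iff_degree_pos, hcompdeg]
    rcases hQodd with ⟨k, hk⟩; omega
  have hbot' : Filter.Tendsto (fun x => Q'.eval x) Filter.atTop Filter.atBot :=
    Polynomial.tendsto_atBot_of_leadingCoeff_nonpos Q' hQ'deg hlcneg.le
  have heval : ∀ x : ℝ, Q'.eval x = Q.eval (-x) := by
    intro x; simp [hQ', Polynomial.eval_comp]
  have hbot : Filter.Tendsto (fun x => Q.eval x) Filter.atBot Filter.atBot := by
    have := hbot'.comp (Filter.tendsto_neg_atBot_atTop (G := ℝ))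
    simpa [Function.comp_def, heval] using this
  have hsurj : Function.Surjective (fun x => Q.eval x) :=
    Continuous.surjective (Polynomial.continuous Q) htop hbot
  exact hsurj 0

instance : IsRealClosedField ℝ where
  isSquare_of_nonneg x hx := ⟨Real.sqrt x, (Real.mul_self_sqrt hx).symm⟩
  exists_root_of_odd := real_odd_root

/-- if `B ⊆ ℝ(x₁,…,xₙ)` is an `ℝ[x₁,…,xₙ]`-subalgebra satisfying the
substitution property, then for `f = p/q ∈ B` with `p, q` coprime one has
`Z(q) ⊆ Z(p)`. -/
theorem stmt4 (n : ℕ) (B : Subalgebra ℝ (FractionRing (MvPolynomial (Fin n) ℝ)))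
    (hB : ∀ p : MvPolynomial (Fin n) ℝ, algebraMap _ (FractionRing (MvPolynomial (Fin n) ℝ)) p ∈ B)
    (hsub : ∀ (R : Type) [Field R] [LinearOrder R] [IsStrictOrderedRing R] [IsRealClosedField R] [Algebra ℝ R]
      (φ : MvPolynomial (Fin n) ℝ →ₐ[ℝ] R),
      ∃! ψ : B →ₐ[ℝ] R, ∀ p : MvPolynomial (Fin n) ℝ,
        ψ ⟨algebraMap _ _ p, hB p⟩ = φ p)
    (p q : MvPolynomial (Fin n) ℝ)
    (hcop : ∀ d : MvPolynomial (Fin n) ℝ, d ∣ p → d ∣ q → IsUnit d)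
    (hq : q ≠ 0)
    (hf : algebraMap _ (FractionRing (MvPolynomial (Fin n) ℝ)) p /
          algebraMap _ (FractionRing (MvPolynomial (Fin n) ℝ)) q ∈ B) :
    Zset n q ⊆ Zset n p := by
  intro x hx
  have hqx : eval x q = 0 := hx
  obtain ⟨ψ, hψ, -⟩ := hsub ℝ (MvPolynomial.aeval x)
  set K := FractionRing (MvPolynomial (Fin n) ℝ)
  set fq : K := algebraMap _ K q
  set fp : K := algebraMap _ K p
  have hfq0 : fq ≠ 0 := by
    simpa [fq] using (map_ne_zero_iff _
      (IsFractionRing.injective (MvPolynomial (Fin n) ℝ) K)).mpr hq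
  have hrel : (⟨fq, hB q⟩ : B) * ⟨fp / fq, hf⟩ = ⟨fp, hB p⟩ := by
    ext
    simp [mul_div_cancel₀ fp hfq0]
  have := congrArg ψ hrel
  rw [map_mul, hψ q, hψ p] at this
  simp only [MvPolynomial.aeval_def, algebraMap_eq] at this
  have hq' : (MvPolynomial.aeval x) q = 0 := by
    simpa using hqx
  have hp' : (MvPolynomial.aeval x) p = 0 := by
    rw [← hψ p, ← hrel, map_mul, hψ q, hq', zero_mul]
  simpa [Zset] using hp'
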